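/- Fix ρ>0. Suppose the exact penalty function P_ρ is bounded below on ℝⁿ and x* is a local minimizer of P_ρ. Let y* = |h(x*)| and z* = max{0, −g(x*)}. Then there exist multipliers u*, v* ∈ ℝ^{mE} and s*, t* ∈ ℝ^{mI} such that (x*,y*,z*) together with (u*,v*,s*,t*) is a KKT point of (R_ρ); moreover all components of u*, v*, s*, t* lie in [0,1]. -/

import Mathlib

open RealInnerProductSpace

section Helpers

variable {E : Type*} [NormedAddCommGroup E] [InnerProductSpace ℝ E]

private lemma smallEps' {p B c : ℝ} (hc : 0 < c)
    (hB : ∀ ε : ℝ, 0 < ε → ε ≤ c → p ≤ ε * B) : p ≤ 0 := by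
  have htend : Filter.Tendsto (fun ε : ℝ => ε * B) (nhdsWithin 0 (Set.Ioi 0)) (nhds 0) := by
    have : Filter.Tendsto (fun ε : ℝ => ε * B) (nhds 0) (nhds (0 * B)) :=
      (continuous_mul_right B).tendsto 0
    simpa using this.mono_left nhdsWithin_le_nhds
  refine ge_of_tendsto htend ?_
  filter_upwards [Ioc_mem_nhdsGT_of_mem (Set.mem_Ico.2 ⟨le_refl 0, hc⟩)] with ε hε
  exact hB ε hε.1 hε.2

private lemma quadOpt' (b v : E) (l r lam : ℝ) (hm : lam ∈ Set.Icc l r)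
    (hopt : ∀ θ ∈ Set.Icc l r, ‖v‖ ≤ ‖v + (θ - lam) • b‖) :
    (l < lam → ⟪b, v⟫ ≤ 0) ∧ (lam < r → 0 ≤ ⟪b, v⟫) := by
  have key : ∀ δ : ℝ, (lam + δ ∈ Set.Icc l r) → -(δ^2 * ‖b‖^2) ≤ 2 * (δ * ⟪b, v⟫) := by
    intro δ hδ
    have h1 := hopt (lam + δ) hδ
    have h2 : ‖v‖^2 ≤ ‖v + δ • b‖^2 := by
      have := pow_le_pow_left₀ (norm_nonneg v) h1 2
      simpa using this
    have h3 : ‖v + δ • b‖^2 = ‖v‖^2 + 2 * ⟪v, δ • b⟫ + ‖δ • b‖^2 := norm_add_sq_real v (δ • b)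
    have h4 : ⟪v, δ • b⟫ = δ * ⟪b, v⟫ := by
      rw [real_inner_smul_right, real_inner_comm]
    have h5 : ‖δ • b‖^2 = δ^2 * ‖b‖^2 := by
      rw [norm_smul, mul_pow, Real.norm_eq_abs, sq_abs]
    rw [h3, h4, h5] at h2
    linarith
  constructor
  · intro hl
    have hp : (2:ℝ) * ⟪b, v⟫ ≤ 0 := by
      refine smallEps' (B := ‖b‖^2) (c := lam - l) (by linarith) ?_
      intro ε hε hεc
      have hmem : lam + (-ε) ∈ Set.Icc l r := ⟨by linarith, by linarith [hm.2]⟩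
      have := key (-ε) hmem
      nlinarith
    linarith
  · intro hr
    have hp : (2:ℝ) * (-⟪b, v⟫) ≤ 0 := by
      refine smallEps' (B := ‖b‖^2) (c := r - lam) (by linarith) ?_
      intro ε hε hεc
      have hmem : lam + ε ∈ Set.Icc l r := ⟨by linarith [hm.1], by linarith⟩
      have := key ε hmem
      nlinarith
    linarith

private lemma lineSlope' [CompleteSpace E] (φ : E → ℝ) (hφ : ContDiff ℝ 1 φ) (xs d : E) :
    Filter.Tendsto (fun t : ℝ => (φ (xs + t • d) - φ xs) / t) (nhdsWithin 0 (Set.Ioi 0))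
      (nhds ⟪gradient φ xs, d⟫) := by
  have hdiff : DifferentiableAt ℝ φ xs := (hφ.differentiable one_ne_zero) xs
  have hfd : HasFDerivAt φ (fderiv ℝ φ xs) xs := hdiff.hasFDerivAt
  have hline : HasDerivAt (fun t : ℝ => xs + t • d) d 0 := by
    simpa using (((hasDerivAt_id (0:ℝ)).smul_const d).const_add xs)
  have hfd' : HasFDerivAt φ (fderiv ℝ φ xs) ((fun t : ℝ => xs + t • d) 0) := by simpa using hfd
  have hcomp : HasDerivAt (fun t : ℝ => φ (xs + t • d)) (fderiv ℝ φ xs d) 0 :=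
    hfd'.comp_hasDerivAt 0 hline
  have hinner : ⟪gradient φ xs, d⟫ = fderiv ℝ φ xs d := by
    rw [gradient, InnerProductSpace.toDual_symm_apply]
  rw [hinner]
  have h1 := (hasDerivAt_iff_tendsto_slope).1 hcomp
  have h2 := h1.mono_left (nhdsWithin_mono _ (fun t ht => ne_of_gt ht : Set.Ioi (0:ℝ) ⊆ {(0:ℝ)}ᶜ))
  refine h2.congr ?_
  intro t
  rw [slope_def_field]
  simp

end Helpers

set_option maxHeartbeats 1600000 in
/-- If `P_ρ` is bounded below and `x*` is a local minimizer of `P_ρ`,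
then with `y* = |h(x*)|`, `z* = max{0,−g(x*)}` there are multipliers
`u*, v*, s*, t*` with components in `[0,1]` such that `(x*,y*,z*)` together with
`(u*,v*,s*,t*)` is a KKT point of (R_ρ). -/
theorem stmt4 {n mE mI : ℕ}
    (f : EuclideanSpace ℝ (Fin n) → ℝ)
    (h : Fin mE → EuclideanSpace ℝ (Fin n) → ℝ)
    (g : Fin mI → EuclideanSpace ℝ (Fin n) → ℝ)
    (hf : ContDiff ℝ 1 f) (hh : ∀ i, ContDiff ℝ 1 (h i)) (hg : ∀ i, ContDiff ℝ 1 (g i))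
    (ρ : ℝ) (hρ : 0 < ρ)
    (hbdd : BddBelow (Set.range fun x : EuclideanSpace ℝ (Fin n) =>
      ρ * f x + ((∑ i, |h i x|) + ∑ i, max 0 (-(g i x)))))
    (xs : EuclideanSpace ℝ (Fin n))
    (hmin : IsLocalMin
      (fun x => ρ * f x + ((∑ i, |h i x|) + ∑ i, max 0 (-(g i x)))) xs) :
    ∃ (u v : Fin mE → ℝ) (s t : Fin mI → ℝ),
      -- nonnegativity and boundedness of the multipliers
      (∀ i, u i ∈ Set.Icc (0:ℝ) 1) ∧ (∀ i, v i ∈ Set.Icc (0:ℝ) 1) ∧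
      (∀ i, s i ∈ Set.Icc (0:ℝ) 1) ∧ (∀ i, t i ∈ Set.Icc (0:ℝ) 1) ∧
      -- stationarity: ρ∇f(x*) + ∇h(x*)(u−v) − ∇g(x*)s = 0
      (ρ • gradient f xs + (∑ i, (u i - v i) • gradient (h i) xs)
        - (∑ i, s i • gradient (g i) xs) = 0) ∧
      -- 1 − u_i − v_i = 0 and 1 − s_i − t_i = 0
      (∀ i, 1 - u i - v i = 0) ∧ (∀ i, 1 - s i - t i = 0) ∧
      -- complementarity
      (∑ i, u i * (|h i xs| - h i xs) = 0) ∧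
      (∑ i, v i * (|h i xs| + h i xs) = 0) ∧
      (∑ i, s i * (max 0 (-(g i xs)) + g i xs) = 0) ∧
      (∑ i, t i * max 0 (-(g i xs)) = 0) := by
  classical
  set Φ : EuclideanSpace ℝ (Fin n) → ℝ :=
    fun x => ρ * f x + ((∑ i, |h i x|) + ∑ i, max 0 (-(g i x))) with hΦ
  -- the per-coordinate intervals for the candidate multipliers
  set lE : Fin mE → ℝ := fun i => if 0 < h i xs then 1 else -1 with hlE
  set rE : Fin mE → ℝ := fun i => if h i xs < 0 then -1 else 1 with hrE
  set lI : Fin mI → ℝ := fun i => if g i xs < 0 then 1 else 0 with hlI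
  set rI : Fin mI → ℝ := fun i => if 0 < g i xs then 0 else 1 with hrI
  have hlrE : lE ≤ rE := by
    intro i; simp only [hlE, hrE]
    split_ifs <;> linarith
  have hlrI : lI ≤ rI := by
    intro i; simp only [hlI, hrI]
    split_ifs <;> linarith
  set K : Set ((Fin mE → ℝ) × (Fin mI → ℝ)) := (Set.Icc lE rE) ×ˢ (Set.Icc lI rI) with hK
  have hKc : IsCompact K := (isCompact_Icc).prod (isCompact_Icc)
  have hKne : K.Nonempty :=
    ⟨(lE, lI), Set.mk_mem_prod (Set.mem_Icc.2 ⟨le_refl _, hlrE⟩)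
      (Set.mem_Icc.2 ⟨le_refl _, hlrI⟩)⟩
  have hFc : Continuous (fun p : (Fin mE → ℝ) × (Fin mI → ℝ) =>
      ‖ρ • gradient f xs + (∑ i, p.1 i • gradient (h i) xs)
        - (∑ i, p.2 i • gradient (g i) xs)‖) := by
    apply Continuous.norm
    refine (continuous_const.add ?_).sub ?_
    · exact continuous_finset_sum _
        (fun i _ => ((continuous_apply i).comp continuous_fst).smul continuous_const)
    · exact continuous_finset_sum _
        (fun i _ => ((continuous_apply i).comp continuous_snd).smul continuous_const)
  obtain ⟨⟨lam, mu⟩, hpK, hpmin⟩ := hKc.exists_isMinOn hKne hFc.continuousOn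
  have hp1 : lam ∈ Set.Icc lE rE := (Set.mem_prod.1 hpK).1
  have hp2 : mu ∈ Set.Icc lI rI := (Set.mem_prod.1 hpK).2
  have hlamE : ∀ i, lE i ≤ lam i ∧ lam i ≤ rE i :=
    fun i => ⟨(Set.mem_Icc.1 hp1).1 i, (Set.mem_Icc.1 hp1).2 i⟩
  have hmuI : ∀ i, lI i ≤ mu i ∧ mu i ≤ rI i :=
    fun i => ⟨(Set.mem_Icc.1 hp2).1 i, (Set.mem_Icc.1 hp2).2 i⟩
  set vv : EuclideanSpace ℝ (Fin n) := ρ • gradient f xs + (∑ i, lam i • gradient (h i) xs)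
    - (∑ i, mu i • gradient (g i) xs) with hvv
  set dd : EuclideanSpace ℝ (Fin n) := -vv with hdd
  -- the minimality restated
  have hmin2 : ∀ q ∈ K, ‖vv‖ ≤ ‖ρ • gradient f xs + (∑ i, q.1 i • gradient (h i) xs)
      - (∑ i, q.2 i • gradient (g i) xs)‖ := by
    intro q hq
    have := isMinOn_iff.1 hpmin q hq
    simpa [← hvv] using this
  -- first order conditions
  have condE : ∀ i, (lE i < lam i → ⟪gradient (h i) xs, vv⟫ ≤ 0) ∧
      (lam i < rE i → 0 ≤ ⟪gradient (h i) xs, vv⟫) := by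
    intro i
    refine quadOpt' _ _ _ _ _ (Set.mem_Icc.2 ⟨(hlamE i).1, (hlamE i).2⟩) ?_
    intro θ hθ
    have hmemθ : ((Function.update lam i θ, mu) : (Fin mE → ℝ) × (Fin mI → ℝ)) ∈ K := by
      refine Set.mk_mem_prod (Set.mem_Icc.2 ⟨?_, ?_⟩) hp2
      · intro j; rw [Function.update_apply]; split_ifs with hj
        · subst hj; exact hθ.1
        · exact (hlamE j).1
      · intro j; rw [Function.update_apply]; split_ifs with hj
        · subst hj; exact hθ.2
        · exact (hlamE j).2
    have hsum : (∑ j, Function.update lam i θ j • gradient (h j) xs)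
        = (∑ j, lam j • gradient (h j) xs) + (θ - lam i) • gradient (h i) xs := by
      have e1 : ∀ j, Function.update lam i θ j • gradient (h j) xs
          = Function.update (fun j => lam j • gradient (h j) xs) i (θ • gradient (h i) xs) j :=
        fun j => (Function.apply_update (fun j (a : ℝ) => a • gradient (h j) xs) lam i θ j)
      rw [Finset.sum_congr rfl (fun j _ => e1 j),
        Finset.sum_update_of_mem (Finset.mem_univ i),
        Finset.sum_eq_sum_sdiff_singleton_add (Finset.mem_univ i)
          (fun j => lam j • gradient (h j) xs), sub_smul]
      abel
    have h2 := hmin2 _ hmemθ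
    simp only [hsum] at h2
    have h3 : ρ • gradient f xs + ((∑ j, lam j • gradient (h j) xs)
        + (θ - lam i) • gradient (h i) xs) - (∑ i, mu i • gradient (g i) xs)
        = vv + (θ - lam i) • gradient (h i) xs := by
      rw [hvv]; abel
    rw [h3] at h2
    exact h2
  have condI : ∀ i, (lI i < mu i → ⟪-(gradient (g i) xs), vv⟫ ≤ 0) ∧
      (mu i < rI i → 0 ≤ ⟪-(gradient (g i) xs), vv⟫) := by
    intro i
    refine quadOpt' _ _ _ _ _ (Set.mem_Icc.2 ⟨(hmuI i).1, (hmuI i).2⟩) ?_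
    intro θ hθ
    have hmemθ : ((lam, Function.update mu i θ) : (Fin mE → ℝ) × (Fin mI → ℝ)) ∈ K := by
      refine Set.mk_mem_prod hp1 (Set.mem_Icc.2 ⟨?_, ?_⟩)
      · intro j; rw [Function.update_apply]; split_ifs with hj
        · subst hj; exact hθ.1
        · exact (hmuI j).1
      · intro j; rw [Function.update_apply]; split_ifs with hj
        · subst hj; exact hθ.2
        · exact (hmuI j).2
    have hsum : (∑ j, Function.update mu i θ j • gradient (g j) xs)
        = (∑ j, mu j • gradient (g j) xs) + (θ - mu i) • gradient (g i) xs := by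
      have e1 : ∀ j, Function.update mu i θ j • gradient (g j) xs
          = Function.update (fun j => mu j • gradient (g j) xs) i (θ • gradient (g i) xs) j :=
        fun j => (Function.apply_update (fun j (a : ℝ) => a • gradient (g j) xs) mu i θ j)
      rw [Finset.sum_congr rfl (fun j _ => e1 j),
        Finset.sum_update_of_mem (Finset.mem_univ i),
        Finset.sum_eq_sum_sdiff_singleton_add (Finset.mem_univ i)
          (fun j => mu j • gradient (g j) xs), sub_smul]
      abel
    have h2 := hmin2 _ hmemθ
    simp only [hsum] at h2
    have h3 : ρ • gradient f xs + (∑ j, lam j • gradient (h j) xs)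
        - ((∑ j, mu j • gradient (g j) xs) + (θ - mu i) • gradient (g i) xs)
        = vv + (θ - mu i) • (-(gradient (g i) xs)) := by
      rw [hvv, smul_neg]; abel
    rw [h3] at h2
    exact h2
  -- forced values in the inactive cases
  have hlampos : ∀ i, 0 < h i xs → lam i = 1 := by
    intro i hi
    have h1 : lE i = 1 := by simp only [hlE]; rw [if_pos hi]
    have h2 : rE i = 1 := by simp only [hrE]; rw [if_neg (by linarith)]
    have := hlamE i; rw [h1] at this; rw [h2] at this; linarith [this.1, this.2]
  have hlamneg : ∀ i, h i xs < 0 → lam i = -1 := by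
    intro i hi
    have h1 : lE i = -1 := by simp only [hlE]; rw [if_neg (by linarith)]
    have h2 : rE i = -1 := by simp only [hrE]; rw [if_pos hi]
    have := hlamE i; rw [h1] at this; rw [h2] at this; linarith [this.1, this.2]
  have hmupos : ∀ i, 0 < g i xs → mu i = 0 := by
    intro i hi
    have h1 : lI i = 0 := by simp only [hlI]; rw [if_neg (by linarith)]
    have h2 : rI i = 0 := by simp only [hrI]; rw [if_pos hi]
    have := hmuI i; rw [h1] at this; rw [h2] at this; linarith [this.1, this.2]
  have hmuneg : ∀ i, g i xs < 0 → mu i = 1 := by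
    intro i hi
    have h1 : lI i = 1 := by simp only [hlI]; rw [if_pos hi]
    have h2 : rI i = 1 := by simp only [hrI]; rw [if_neg (by linarith)]
    have := hmuI i; rw [h1] at this; rw [h2] at this; linarith [this.1, this.2]
  have hlam11 : ∀ i, -1 ≤ lam i ∧ lam i ≤ 1 := by
    intro i
    have h1 : -1 ≤ lE i := by simp only [hlE]; split_ifs <;> norm_num
    have h2 : rE i ≤ 1 := by simp only [hrE]; split_ifs <;> norm_num
    exact ⟨le_trans h1 (hlamE i).1, le_trans (hlamE i).2 h2⟩
  have hmu01 : ∀ i, 0 ≤ mu i ∧ mu i ≤ 1 := by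
    intro i
    have h1 : 0 ≤ lI i := by simp only [hlI]; split_ifs <;> norm_num
    have h2 : rI i ≤ 1 := by simp only [hrI]; split_ifs <;> norm_num
    exact ⟨le_trans h1 (hmuI i).1, le_trans (hmuI i).2 h2⟩
  -- continuity along the line
  have hlinec : Continuous (fun t : ℝ => xs + t • dd) :=
    continuous_const.add (continuous_id.smul continuous_const)
  -- the directional-derivative limits
  have hE : ∀ i, Filter.Tendsto
      (fun t : ℝ => (|h i (xs + t • dd)| - |h i xs|) / t) (nhdsWithin 0 (Set.Ioi 0))
      (nhds (lam i * ⟪gradient (h i) xs, dd⟫)) := by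
    intro i
    have hci : Continuous (fun t : ℝ => h i (xs + t • dd)) := (hh i).continuous.comp hlinec
    have hc0 : Filter.Tendsto (fun t : ℝ => h i (xs + t • dd)) (nhds 0) (nhds (h i xs)) := by
      simpa using hci.tendsto 0
    rcases lt_trichotomy (h i xs) 0 with hneg | hzero | hpos
    · rw [hlamneg i hneg, neg_one_mul]
      refine Filter.Tendsto.congr' ?_ (lineSlope' (h i) (hh i) xs dd).neg
      filter_upwards [(hc0.eventually_lt_const hneg).filter_mono nhdsWithin_le_nhds] with t ht
      rw [abs_of_neg ht, abs_of_neg hneg]; ring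
    · -- active case, use the first order conditions
      have hbd : ⟪gradient (h i) xs, dd⟫ = -⟪gradient (h i) xs, vv⟫ := by
        rw [hdd, inner_neg_right]
      have hlEi : lE i = -1 := by simp only [hlE]; rw [if_neg (by rw [hzero]; exact lt_irrefl 0)]
      have hrEi : rE i = 1 := by simp only [hrE]; rw [if_neg (by rw [hzero]; exact lt_irrefl 0)]
      have c1 := (condE i).1
      have c2 := (condE i).2
      rw [hlEi] at c1; rw [hrEi] at c2
      have habs : |⟪gradient (h i) xs, dd⟫| = lam i * ⟪gradient (h i) xs, dd⟫ := by
        rcases lt_or_ge (lam i) 1 with hc | hc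
        · have hple : ⟪gradient (h i) xs, dd⟫ ≤ 0 := by
            have := c2 hc; rw [hbd]; linarith
          rcases lt_or_ge (-1 : ℝ) (lam i) with hc2 | hc2
          · have hpge : 0 ≤ ⟪gradient (h i) xs, dd⟫ := by
              have := c1 hc2; rw [hbd]; linarith
            have : ⟪gradient (h i) xs, dd⟫ = 0 := le_antisymm hple hpge
            rw [this]; simp
          · have : lam i = -1 := le_antisymm (by linarith) (hlam11 i).1
            rw [this, abs_of_nonpos hple]; ring
        · have hlam1 : lam i = 1 := le_antisymm (hlam11 i).2 hc
          have hpge : 0 ≤ ⟪gradient (h i) xs, dd⟫ := by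
            have := c1 (by rw [hlam1]; norm_num); rw [hbd]; linarith
          rw [hlam1, abs_of_nonneg hpge, one_mul]
      rw [← habs]
      refine Filter.Tendsto.congr' ?_ (lineSlope' (h i) (hh i) xs dd).abs
      filter_upwards [self_mem_nhdsWithin] with t ht
      rw [hzero, sub_zero, abs_zero, sub_zero, abs_div, abs_of_pos (show (0:ℝ) < t from ht)]
    · rw [hlampos i hpos, one_mul]
      refine Filter.Tendsto.congr' ?_ (lineSlope' (h i) (hh i) xs dd)
      filter_upwards [(hc0.eventually_const_lt hpos).filter_mono nhdsWithin_le_nhds] with t ht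
      rw [abs_of_pos ht, abs_of_pos hpos]
  have hI : ∀ i, Filter.Tendsto
      (fun t : ℝ => (max 0 (-(g i (xs + t • dd))) - max 0 (-(g i xs))) / t)
      (nhdsWithin 0 (Set.Ioi 0))
      (nhds (-(mu i * ⟪gradient (g i) xs, dd⟫))) := by
    intro i
    have hci : Continuous (fun t : ℝ => g i (xs + t • dd)) := (hg i).continuous.comp hlinec
    have hc0 : Filter.Tendsto (fun t : ℝ => g i (xs + t • dd)) (nhds 0) (nhds (g i xs)) := by
      simpa using hci.tendsto 0
    rcases lt_trichotomy (g i xs) 0 with hneg | hzero | hpos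
    · rw [hmuneg i hneg, one_mul]
      refine Filter.Tendsto.congr' ?_ (lineSlope' (g i) (hg i) xs dd).neg
      filter_upwards [(hc0.eventually_lt_const hneg).filter_mono nhdsWithin_le_nhds] with t ht
      rw [max_eq_right (by linarith : (0:ℝ) ≤ -(g i (xs + t • dd))),
        max_eq_right (by linarith : (0:ℝ) ≤ -(g i xs))]
      ring
    · have hqd : ⟪gradient (g i) xs, dd⟫ = ⟪-(gradient (g i) xs), vv⟫ := by
        rw [hdd, inner_neg_right, inner_neg_left]
      have hlIi : lI i = 0 := by simp only [hlI]; rw [if_neg (by rw [hzero]; exact lt_irrefl 0)]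
      have hrIi : rI i = 1 := by simp only [hrI]; rw [if_neg (by rw [hzero]; exact lt_irrefl 0)]
      have c1 := (condI i).1
      have c2 := (condI i).2
      rw [hlIi] at c1; rw [hrIi] at c2
      have hmax : max 0 (-⟪gradient (g i) xs, dd⟫) = -(mu i * ⟪gradient (g i) xs, dd⟫) := by
        rcases lt_or_ge (mu i) 1 with hc | hc
        · have hge : 0 ≤ ⟪gradient (g i) xs, dd⟫ := by
            have := c2 hc; rw [hqd]; linarith
          rcases lt_or_ge (0 : ℝ) (mu i) with hc2 | hc2
          · have hle : ⟪gradient (g i) xs, dd⟫ ≤ 0 := by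
              have := c1 hc2; rw [hqd]; linarith
            have h0 : ⟪gradient (g i) xs, dd⟫ = 0 := le_antisymm hle hge
            rw [h0]; simp
          · have hmu0 : mu i = 0 := le_antisymm (by linarith) (hmu01 i).1
            rw [hmu0, max_eq_left (by linarith)]; ring
        · have hmu1 : mu i = 1 := le_antisymm (hmu01 i).2 hc
          have hle : ⟪gradient (g i) xs, dd⟫ ≤ 0 := by
            have := c1 (by rw [hmu1]; norm_num); rw [hqd]; linarith
          rw [hmu1, max_eq_right (by linarith), one_mul]
      rw [← hmax]
      have hlim : Filter.Tendsto (fun t : ℝ => max 0 (-((g i (xs + t • dd) - g i xs) / t)))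
          (nhdsWithin 0 (Set.Ioi 0)) (nhds (max 0 (-⟪gradient (g i) xs, dd⟫))) :=
        tendsto_const_nhds.max (lineSlope' (g i) (hg i) xs dd).neg
      refine Filter.Tendsto.congr' ?_ hlim
      filter_upwards [self_mem_nhdsWithin] with t ht
      have ht' : (0:ℝ) < t := ht
      simp only [hzero, neg_zero, max_self, sub_zero]
      rcases le_or_gt 0 (g i (xs + t • dd)) with hge | hlt
      · rw [max_eq_left (neg_nonpos.2 (div_nonneg hge ht'.le)),
          max_eq_left (neg_nonpos.2 hge), zero_div]
      · rw [max_eq_right (neg_nonneg.2 (div_neg_of_neg_of_pos hlt ht').le),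
          max_eq_right (neg_nonneg.2 hlt.le), neg_div]
    · rw [hmupos i hpos, zero_mul, neg_zero]
      have hev : ∀ᶠ t in nhdsWithin (0:ℝ) (Set.Ioi 0), (0:ℝ) < g i (xs + t • dd) :=
        (hc0.eventually_const_lt hpos).filter_mono nhdsWithin_le_nhds
      refine Filter.Tendsto.congr' ?_ tendsto_const_nhds
      filter_upwards [hev] with t ht
      rw [max_eq_left (by linarith), max_eq_left (by linarith), sub_zero, zero_div]
  -- the limit of the difference quotient of Φ
  set Dval : ℝ := ρ * ⟪gradient f xs, dd⟫ + ((∑ i, lam i * ⟪gradient (h i) xs, dd⟫)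
    + ∑ i, -(mu i * ⟪gradient (g i) xs, dd⟫)) with hDval
  have hQ : Filter.Tendsto (fun t : ℝ => (Φ (xs + t • dd) - Φ xs) / t)
      (nhdsWithin 0 (Set.Ioi 0)) (nhds Dval) := by
    have hA := (lineSlope' f hf xs dd).const_mul ρ
    have hsumE := tendsto_finset_sum Finset.univ (fun i (_ : i ∈ Finset.univ) => hE i)
    have hsumI := tendsto_finset_sum Finset.univ (fun i (_ : i ∈ Finset.univ) => hI i)
    have hcomb := hA.add (hsumE.add hsumI)
    refine hcomb.congr ?_
    intro t
    simp only [hΦ]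
    rw [← Finset.sum_div, ← Finset.sum_div, Finset.sum_sub_distrib, Finset.sum_sub_distrib]
    ring
  -- nonnegativity of the directional derivative
  have hDpos : 0 ≤ Dval := by
    refine ge_of_tendsto hQ ?_
    have hxev : ∀ᶠ t in nhds (0:ℝ), Φ xs ≤ Φ (xs + t • dd) := by
      have hxt : Filter.Tendsto (fun t : ℝ => xs + t • dd) (nhds 0) (nhds xs) := by
        simpa using hlinec.tendsto 0
      exact hxt.eventually hmin
    filter_upwards [hxev.filter_mono nhdsWithin_le_nhds, self_mem_nhdsWithin] with t h1 ht
    exact div_nonneg (by linarith) (le_of_lt ht)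
  -- Dval = -‖vv‖²
  have hvd : ⟪vv, dd⟫ = Dval := by
    rw [hDval]
    conv_lhs => rw [hvv]
    rw [inner_sub_left, inner_add_left, sum_inner, sum_inner, real_inner_smul_left]
    simp only [real_inner_smul_left]
    rw [Finset.sum_neg_distrib]
    ring
  have hvd2 : ⟪vv, dd⟫ = -‖vv‖^2 := by
    rw [hdd, inner_neg_right, real_inner_self_eq_norm_sq]
  have hvv0 : vv = 0 := by
    have h1 : ‖vv‖^2 ≤ 0 := by
      rw [hvd2] at hvd; rw [← hvd] at hDpos; linarith
    have h2 : ‖vv‖ = 0 := by nlinarith [norm_nonneg vv]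
    exact norm_eq_zero.1 h2
  -- assemble the multipliers
  refine ⟨fun i => (1 + lam i) / 2, fun i => (1 - lam i) / 2, mu, fun i => 1 - mu i,
    ?_, ?_, ?_, ?_, ?_, ?_, ?_, ?_, ?_, ?_, ?_⟩
  · intro i; have := hlam11 i
    exact ⟨show (0:ℝ) ≤ (1 + lam i) / 2 by linarith [this.1],
      show (1 + lam i) / 2 ≤ 1 by linarith [this.2]⟩
  · intro i; have := hlam11 i
    exact ⟨show (0:ℝ) ≤ (1 - lam i) / 2 by linarith [this.2],
      show (1 - lam i) / 2 ≤ 1 by linarith [this.1]⟩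
  · intro i; exact ⟨(hmu01 i).1, (hmu01 i).2⟩
  · intro i; have := hmu01 i
    exact ⟨show (0:ℝ) ≤ 1 - mu i by linarith [this.2],
      show 1 - mu i ≤ 1 by linarith [this.1]⟩
  · -- stationarity
    have hcoef : (∑ i, ((1 + lam i) / 2 - (1 - lam i) / 2) • gradient (h i) xs)
        = ∑ i, lam i • gradient (h i) xs :=
      Finset.sum_congr rfl (fun i _ => by
        rw [show ((1 + lam i) / 2 - (1 - lam i) / 2) = lam i by ring])
    rw [hcoef, ← hvv]
    exact hvv0
  · intro i; ring
  · intro i; ring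
  · refine Finset.sum_eq_zero (fun i _ => ?_)
    show (1 + lam i) / 2 * (|h i xs| - h i xs) = 0
    rcases lt_trichotomy (h i xs) 0 with hneg | hzero | hpos
    · rw [hlamneg i hneg]; norm_num
    · rw [hzero]; simp
    · rw [abs_of_pos hpos, sub_self, mul_zero]
  · refine Finset.sum_eq_zero (fun i _ => ?_)
    show (1 - lam i) / 2 * (|h i xs| + h i xs) = 0
    rcases lt_trichotomy (h i xs) 0 with hneg | hzero | hpos
    · rw [abs_of_neg hneg]; ring
    · rw [hzero]; simp
    · rw [hlampos i hpos]; norm_num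
  · refine Finset.sum_eq_zero (fun i _ => ?_)
    rcases lt_trichotomy (g i xs) 0 with hneg | hzero | hpos
    · rw [max_eq_right (by linarith : (0:ℝ) ≤ -(g i xs))]; ring
    · rw [hzero]; simp
    · rw [hmupos i hpos, zero_mul]
  · refine Finset.sum_eq_zero (fun i _ => ?_)
    show (1 - mu i) * (0 ⊔ -g i xs) = 0
    rcases lt_trichotomy (g i xs) 0 with hneg | hzero | hpos
    · rw [hmuneg i hneg]; norm_num
    · rw [hzero]; simp
    · rw [max_eq_left (by linarith : -(g i xs) ≤ 0), mul_zero]
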